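/- If G is a graph with at least one edge and H is any finite graph, then Γ(G □ H) ≥ |V(H)|. -/

import Mathlib

open SimpleGraph

variable {V : Type*} {W : Type*}

/-- `D` is a dominating set of `G`: every vertex outside `D` has a neighbor in `D`. -/
def IsDomSet (G : SimpleGraph V) (D : Set V) : Prop :=
  ∀ v ∉ D, ∃ u ∈ D, G.Adj u v

/-- `D` is a minimal dominating set: dominating, and no proper subset is dominating. -/
def IsMinDomSet (G : SimpleGraph V) (D : Set V) : Prop :=
  IsDomSet G D ∧ ∀ D' ⊂ D, ¬ IsDomSet G D'

/-- The upper domination number `Γ(G)`: maximum size of a minimal dominating set. -/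
noncomputable def upperDom (G : SimpleGraph V) : ℕ :=
  sSup {n | ∃ D : Set V, IsMinDomSet G D ∧ D.ncard = n}

/-- In a finite graph, any dominating set contains a minimal dominating subset. -/
lemma exists_minDom_subset [Fintype V] (G : SimpleGraph V) (D : Set V)
    (hD : IsDomSet G D) : ∃ D' ⊆ D, IsMinDomSet G D' := by
  classical
  set S : Set ℕ := {n | ∃ E, E ⊆ D ∧ IsDomSet G E ∧ E.ncard = n} with hS
  have hne : S.Nonempty := ⟨D.ncard, D, subset_rfl, hD, rfl⟩
  obtain ⟨E, hED, hEdom, hEcard⟩ := Nat.sInf_mem hne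
  refine ⟨E, hED, hEdom, fun E' hE' hE'dom => ?_⟩
  have h1 : E'.ncard ∈ S := ⟨E', hE'.1.trans hED, hE'dom, rfl⟩
  have h2 : E'.ncard < E.ncard := Set.ncard_lt_ncard hE' (Set.toFinite E)
  have := Nat.sInf_le h1
  omega

theorem stmt_10 [Fintype V] [Fintype W] (G : SimpleGraph V) (H : SimpleGraph W)
    (hG : ∃ u v, G.Adj u v) :
    upperDom (G.boxProd H) ≥ Fintype.card W := by
  classical
  obtain ⟨u, v, huv⟩ := hG
  set D : Set (V × W) := {p | ¬ G.Adj u p.1} with hDdef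
  have hDdom : IsDomSet (G.boxProd H) D := by
    intro p hp
    simp only [hDdef, Set.mem_setOf_eq, not_not] at hp
    refine ⟨(u, p.2), by simp [hDdef, G.irrefl], ?_⟩
    exact Or.inl ⟨hp, rfl⟩
  obtain ⟨D', hD'sub, hD'min⟩ := exists_minDom_subset (G.boxProd H) D hDdom
  -- every layer meets D'
  have hlayer : ∀ w : W, ∃ y : V, (y, w) ∈ D' := by
    intro w
    have hvw : (v, w) ∉ D' := fun h => hD'sub h huv
    obtain ⟨⟨y, h⟩, hyD', hadj⟩ := hD'min.1 (v, w) hvw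
    rcases hadj with ⟨hadj1, hadj2⟩ | ⟨hadj1, hadj2⟩
    · exact ⟨y, by simpa [show h = w from hadj2] using hyD'⟩
    · exact absurd huv (by simpa [hDdef, show y = v from hadj2] using hD'sub hyD')
  choose f hf using hlayer
  have hfin : Fintype.card W ≤ D'.ncard := by
    have hinj : Function.Injective (fun w => (⟨(f w, w), hf w⟩ : D')) := by
      intro a b hab
      simpa using congrArg (fun x : D' => (x : V × W).2) hab
    calc Fintype.card W ≤ Fintype.card D' := Fintype.card_le_of_injective _ hinj
      _ = D'.ncard := by
          rw [Set.ncard_eq_toFinset_card']; simp [Set.toFinset_card]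
  have hmem : D'.ncard ∈ {n | ∃ E : Set (V × W), IsMinDomSet (G.boxProd H) E ∧ E.ncard = n} :=
    ⟨D', hD'min, rfl⟩
  have hbdd : BddAbove {n | ∃ E : Set (V × W), IsMinDomSet (G.boxProd H) E ∧ E.ncard = n} := by
    refine ⟨Fintype.card (V × W), fun n hn => ?_⟩
    obtain ⟨E, _, hE⟩ := hn
    rw [← hE]
    calc E.ncard ≤ Set.univ.ncard := Set.ncard_le_ncard (Set.subset_univ E) (Set.toFinite _)
      _ = Fintype.card (V × W) := by rw [Set.ncard_univ, Nat.card_eq_fintype_card]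
  exact le_trans hfin (le_csSup hbdd hmem)
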